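/- Let (G,κ) be a capacitated graph with κ(x) ≤ d_G(x) for all x. If for every nonempty W ⊆ Y^{κ>0} there is no matching from L(W) to W^κ of size |L(W)| in G^aux (property M*), then for every nonempty W ⊆ Y^{κ>0} one has |L(W)| > |W^κ| (property O*). -/

import Mathlib

open Finset
open scoped Classical

noncomputable section

variable {V : Type*} [Fintype V]

/-- Degree of a vertex in a (simple) graph on a finite vertex set. -/
def deg (H : SimpleGraph V) (x : V) : ℕ :=
  (Finset.univ.filter fun y => H.Adj x y).card

/-- `(D, P; H)` is a DP-Nash subgraph of the capacitated graph `(G, κ)`: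
`H` is a spanning subgraph of `G`, bipartite with partite sets `D` and `P`,
no vertex of `P` is isolated in `H`, and every `x ∈ D` has
`H`-degree `min (d_G x) (κ x)`. -/
def IsDPNash (G : SimpleGraph V) (κ : V → ℕ) (D P : Finset V) (H : SimpleGraph V) : Prop :=
  H ≤ G ∧ D ∪ P = Finset.univ ∧ Disjoint D P ∧
    (∀ ⦃u v⦄, H.Adj u v → (u ∈ D ∧ v ∈ P) ∨ (u ∈ P ∧ v ∈ D)) ∧
    (∀ v ∈ P, 0 < deg H v) ∧
    (∀ x ∈ D, deg H x = min (deg G x) (κ x))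

/-- `X = {x : κ(x) = d_G(x)}`. -/
def XX (G : SimpleGraph V) (κ : V → ℕ) : Finset V :=
  Finset.univ.filter fun x => κ x = deg G x

/-- `Y = N(X) \ X`. -/
def YY (G : SimpleGraph V) (κ : V → ℕ) : Finset V :=
  Finset.univ.filter fun y => y ∉ XX G κ ∧ ∃ x ∈ XX G κ, G.Adj x y

/-- `Z = V \ (X ∪ Y)`. -/
def ZZ (G : SimpleGraph V) (κ : V → ℕ) : Finset V :=
  Finset.univ \ (XX G κ ∪ YY G κ)

/-- `Y^{κ>0} = {y ∈ Y : κ(y) > 0}`. -/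
def Ypos (G : SimpleGraph V) (κ : V → ℕ) : Finset V :=
  (YY G κ).filter fun y => 0 < κ y

/-- The neighbours of `x` in `G` lying in `W`. -/
def nbrW (G : SimpleGraph V) (x : V) (W : Finset V) : Finset V :=
  Finset.univ.filter fun y => G.Adj x y ∧ y ∈ W

/-- `L(W) = {x ∈ X ∪ Z : |N_G(x) ∩ W| > d_G(x) - κ(x)}`. -/
def LL (G : SimpleGraph V) (κ : V → ℕ) (W : Finset V) : Finset V :=
  (XX G κ ∪ ZZ G κ).filter fun x => deg G x - κ x < (nbrW G x W).card

/-- Property `M*` implies property `O*`: if no nonempty `W ⊆ Y^{κ>0}` admits a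
matching in `G^aux` from `L(W)` into `W^κ` saturating `L(W)`, then every
nonempty `W ⊆ Y^{κ>0}` satisfies `|L(W)| > |W^κ|`. -/
theorem stmt8 (G : SimpleGraph V) (κ : V → ℕ) (hκ : ∀ v, κ v ≤ deg G v)
    (hM : ∀ W : Finset V, W.Nonempty → W ⊆ Ypos G κ →
      ¬ ∃ f : V → V × ℕ, Set.InjOn f ↑(LL G κ W) ∧
        ∀ x ∈ LL G κ W, (f x).1 ∈ W ∧ G.Adj x (f x).1 ∧ (f x).2 < κ (f x).1) :
    ∀ W : Finset V, W.Nonempty → W ⊆ Ypos G κ → ∑ w ∈ W, κ w < (LL G κ W).card := by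
  intro W
  induction W using Finset.strongInduction with
  | _ W ih =>
  intro hW hWY
  classical
  set L := LL G κ W with hLdef
  -- a vertex in L has a neighbour in W
  have hLnbr : ∀ x ∈ L, ∃ w, G.Adj x w ∧ w ∈ W := by
    intro x hx
    have hx2 := (Finset.mem_filter.mp hx).2
    have hpos : 0 < (nbrW G x W).card := Nat.lt_of_le_of_lt (Nat.zero_le _) hx2
    obtain ⟨y, hy⟩ := Finset.card_pos.mp hpos
    have := (Finset.mem_filter.mp hy).2
    exact ⟨y, this.1, this.2⟩
  -- the copies map
  set g : V → Finset (V × ℕ) := fun w => (Finset.range (κ w)).image fun i => (w, i) with hgdef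
  set t : V → Finset (V × ℕ) := fun x => (W.filter fun w => G.Adj x w).biUnion g with htdef
  have hHall : ¬ ∀ s : Finset {x // x ∈ L}, s.card ≤ (s.biUnion fun x => t x.1).card := by
    intro h
    obtain ⟨f₀, hf₀inj, hf₀mem⟩ :=
      (Finset.all_card_le_biUnion_card_iff_existsInjective'
        (fun x : {x // x ∈ L} => t x.1)).mp h
    apply hM W hW hWY
    refine ⟨fun x => if h : x ∈ L then f₀ ⟨x, h⟩ else (x, 0), ?_, ?_⟩
    · intro a ha b hb hab
      simp only [Finset.mem_coe] at ha hb
      simp only [dif_pos (show a ∈ L from ha), dif_pos (show b ∈ L from hb)] at hab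
      exact congrArg Subtype.val (hf₀inj hab)
    · intro x hx
      simp only [dif_pos (show x ∈ L from hx)]
      have := hf₀mem ⟨x, hx⟩
      simp only [htdef, hgdef, Finset.mem_biUnion, Finset.mem_filter, Finset.mem_image,
        Finset.mem_range] at this
      obtain ⟨w, ⟨hwW, hadj⟩, i, hi, hp⟩ := this
      rw [← hp]
      exact ⟨hwW, hadj, hi⟩
  obtain ⟨s, hs⟩ := not_forall.mp hHall
  replace hs := Nat.lt_of_not_le hs
  set S : Finset V := s.image Subtype.val with hSdef
  have hScard : S.card = s.card := Finset.card_image_of_injective _ Subtype.val_injective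
  have hSL : S ⊆ L := by
    intro x hx
    obtain ⟨⟨x', hx'⟩, _, rfl⟩ := Finset.mem_image.mp hx
    exact hx'
  set W₁ : Finset V := W.filter (fun w => ∃ x ∈ S, G.Adj x w) with hW₁def
  have hbi : (s.biUnion fun x => t x.1) = W₁.biUnion g := by
    ext p
    simp only [htdef, hgdef, hW₁def, hSdef, Finset.mem_biUnion, Finset.mem_filter,
      Finset.mem_image, Finset.mem_range]
    constructor
    · rintro ⟨⟨x, hxL⟩, hxs, w, ⟨hwW, hadj⟩, i, hi, rfl⟩
      exact ⟨w, ⟨hwW, x, ⟨⟨x, hxL⟩, hxs, rfl⟩, hadj⟩, i, hi, rfl⟩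
    · rintro ⟨w, ⟨hwW, x, ⟨⟨x', hx'⟩, hx's, rfl⟩, hadj⟩, i, hi, rfl⟩
      exact ⟨⟨x', hx'⟩, hx's, w, ⟨hwW, hadj⟩, i, hi, rfl⟩
  have hgcard : ∀ w, (g w).card = κ w := by
    intro w
    rw [hgdef]
    rw [Finset.card_image_of_injective _ (fun i j h => congrArg Prod.snd h)]
    exact Finset.card_range _
  have hcard : (W₁.biUnion g).card = ∑ w ∈ W₁, κ w := by
    rw [Finset.card_biUnion]
    · exact Finset.sum_congr rfl fun w _ => hgcard w
    · intro a _ b _ hab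
      rw [Function.onFun, Finset.disjoint_left]
      intro p hpa hpb
      simp only [hgdef, Finset.mem_image, Finset.mem_range] at hpa hpb
      obtain ⟨i, _, rfl⟩ := hpa
      obtain ⟨j, _, hj⟩ := hpb
      exact hab (congrArg Prod.fst hj).symm
  have h1 : ∑ w ∈ W₁, κ w < S.card := by
    rw [← hcard, ← hbi, hScard]; exact hs
  have hW₁W : W₁ ⊆ W := Finset.filter_subset _ _
  by_cases hWeq : W₁ = W
  · rw [← hWeq]
    exact lt_of_lt_of_le h1 (Finset.card_le_card hSL)
  · have hW₁ne : W₁.Nonempty := by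
      have hspos : 0 < s.card := Nat.lt_of_le_of_lt (Nat.zero_le _) hs
      obtain ⟨⟨x, hxL⟩, hxs⟩ := Finset.card_pos.mp hspos
      obtain ⟨w, hadj, hwW⟩ := hLnbr x hxL
      refine ⟨w, Finset.mem_filter.mpr ⟨hwW, x, ?_, hadj⟩⟩
      exact Finset.mem_image.mpr ⟨⟨x, hxL⟩, hxs, rfl⟩
    have hW₂ : (W \ W₁).Nonempty := by
      rw [Finset.sdiff_nonempty]
      intro hsub
      exact hWeq (Finset.Subset.antisymm hW₁W hsub)
    have ih2 := ih (W \ W₁) (Finset.sdiff_ssubset hW₁W hW₁ne) hW₂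
      ((Finset.sdiff_subset).trans hWY)
    have hsub : LL G κ (W \ W₁) ⊆ L := by
      intro x hx
      have hx' := Finset.mem_filter.mp hx
      refine Finset.mem_filter.mpr ⟨hx'.1, lt_of_lt_of_le hx'.2 (Finset.card_le_card ?_)⟩
      intro y hy
      have hy' := Finset.mem_filter.mp hy
      exact Finset.mem_filter.mpr ⟨hy'.1, hy'.2.1, (Finset.mem_sdiff.mp hy'.2.2).1⟩
    have hdisj : Disjoint S (LL G κ (W \ W₁)) := by
      rw [Finset.disjoint_left]
      intro x hxS hx2
      have hx2' := (Finset.mem_filter.mp hx2).2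
      have hpos : 0 < (nbrW G x (W \ W₁)).card := Nat.lt_of_le_of_lt (Nat.zero_le _) hx2'
      obtain ⟨y, hy⟩ := Finset.card_pos.mp hpos
      have hy' := (Finset.mem_filter.mp hy).2
      have hyW := Finset.mem_sdiff.mp hy'.2
      exact hyW.2 (Finset.mem_filter.mpr ⟨hyW.1, x, hxS, hy'.1⟩)
    calc ∑ w ∈ W, κ w = ∑ w ∈ W₁, κ w + ∑ w ∈ W \ W₁, κ w := by
          rw [add_comm, Finset.sum_sdiff hW₁W]
      _ < S.card + (LL G κ (W \ W₁)).card := Nat.add_lt_add h1 ih2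
      _ = (S ∪ LL G κ (W \ W₁)).card := (Finset.card_union_of_disjoint hdisj).symm
      _ ≤ L.card := Finset.card_le_card (Finset.union_subset hSL hsub)
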